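/- Under the standing assumptions (convexity and differentiability of each J_i in its own variable, and μ-strong monotonicity and θ0-Lipschitz continuity of the pseudo-gradient F), the extended pseudo-gradient 𝐅 is θ-Lipschitz continuous for some θ ∈ [μ, θ0]: there exists θ with μ ≤ θ ≤ θ0 such that ‖𝐅(𝐱) − 𝐅(𝐲)‖ ≤ θ‖𝐱 − 𝐲‖ for all 𝐱, 𝐲 ∈ ℝ^{Nn}. -/

import Mathlib

open scoped InnerProductSpace

/-- The strategy-profile space `ℝ^n = ℝ^{n_1} × ⋯ × ℝ^{n_N}`, with the Euclidean (ℓ²)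
structure. Block `i` is agent `i`'s strategy space `ℝ^{n_i}`. -/
abbrev Prof (N : ℕ) (d : Fin N → ℕ) : Type :=
  PiLp 2 (fun i : Fin N => EuclideanSpace ℝ (Fin (d i)))

/-- The stacked space `ℝ^{Nn}` of all agents' estimates; block `i` is agent `i`'s estimate
`𝐱_i ∈ ℝ^n` of the full strategy profile. -/
abbrev Est (N : ℕ) (d : Fin N → ℕ) : Type :=
  PiLp 2 (fun _ : Fin N => Prof N d)

/-- The pseudo-gradient `F(x) := col(∇_{x_i} J_i(x_i, x_{−i}))_i`, built from the partial
gradients `G i`. -/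
noncomputable def pseudoGrad {N : ℕ} {d : Fin N → ℕ}
    (G : ∀ i : Fin N, Prof N d → EuclideanSpace ℝ (Fin (d i)))
    (x : Prof N d) : Prof N d :=
  WithLp.toLp 2 (fun i => G i x)

/-- The extended pseudo-gradient `𝐅(𝐱) := col(∇_{x_i} J_i(𝐱_{i,i}, 𝐱_{i,−i}))_i`. -/
noncomputable def extPseudoGrad {N : ℕ} {d : Fin N → ℕ}
    (G : ∀ i : Fin N, Prof N d → EuclideanSpace ℝ (Fin (d i)))
    (bx : Est N d) : Prof N d :=
  WithLp.toLp 2 (fun i => G i (bx i))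

/-- `Rᵀ` places block `i` of `v ∈ ℝ^n` in the `(i,i)`-block position of `ℝ^{Nn}`,
with zeros elsewhere. -/
noncomputable def RT {N : ℕ} {d : Fin N → ℕ} (v : Prof N d) : Est N d :=
  WithLp.toLp 2 (fun i => WithLp.toLp 2 (Function.update (0 : Prof N d) i (v i)))

/-- `𝐖 = W ⊗ I_n` acting blockwise: `(𝐖𝐱)_i = Σ_j w_{ij} 𝐱_j`. -/
noncomputable def Wact {N : ℕ} {d : Fin N → ℕ} (W : Matrix (Fin N) (Fin N) ℝ) (bx : Est N d) : Est N d :=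
  WithLp.toLp 2 (fun i => ∑ j, W i j • bx j)

/-- `F_a(𝐱) := α Rᵀ𝐅(𝐱) + (I_{Nn} − 𝐖)𝐱`. -/
noncomputable def Fa {N : ℕ} {d : Fin N → ℕ} (α : ℝ)
    (G : ∀ i : Fin N, Prof N d → EuclideanSpace ℝ (Fin (d i)))
    (W : Matrix (Fin N) (Fin N) ℝ) (bx : Est N d) : Est N d :=
  α • RT (extPseudoGrad G bx) + (bx - Wact W bx)

/-- `𝛀 := {𝐱 ∈ ℝ^{Nn} : 𝐱_{i,i} ∈ Ω_i for all i}`. -/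
def bigOmega {N : ℕ} {d : Fin N → ℕ}
    (Ω : ∀ i : Fin N, Set (EuclideanSpace ℝ (Fin (d i)))) : Set (Est N d) :=
  {bx | ∀ i, bx i i ∈ Ω i}

/-- Normal cone operator of a closed convex set `S` at `x`
(empty if `x ∉ S`). -/
def normalCone {E : Type*} [NormedAddCommGroup E] [InnerProductSpace ℝ E]
    (S : Set E) (x : E) : Set E :=
  {v | x ∈ S ∧ ∀ z ∈ S, ⟪v, z - x⟫_ℝ ≤ 0}

/-- The consensus subspace `E_n := {𝟏_N ⊗ y : y ∈ ℝ^n} ⊆ ℝ^{Nn}`. -/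
def consensus (N : ℕ) (d : Fin N → ℕ) : Set (Est N d) :=
  {bx | ∃ y : Prof N d, ∀ i, bx i = y}

/-- Lemma 3 of the paper. Under the standing assumptions, the extended
pseudo-gradient `𝐅` is `θ`-Lipschitz continuous for some `θ ∈ [μ, θ0]`. -/
theorem stmt7 {N : ℕ} {d : Fin N → ℕ} (hN : 0 < N) (hd : ∀ i, 0 < d i)
    (J : ∀ _ : Fin N, Prof N d → ℝ)
    (hJconv : ∀ i (x : Prof N d),
      ConvexOn ℝ Set.univ (fun y => J i (WithLp.toLp 2 (Function.update x i y))))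
    (G : ∀ i : Fin N, Prof N d → EuclideanSpace ℝ (Fin (d i)))
    (hGgrad : ∀ i (x : Prof N d),
      HasGradientAt (fun y => J i (WithLp.toLp 2 (Function.update x i y))) (G i x) (x i))
    (μ θ0 : ℝ) (hμ : 0 < μ) (hθ0 : 0 < θ0)
    (hFmon : ∀ x y : Prof N d,
      ⟪x - y, pseudoGrad G x - pseudoGrad G y⟫_ℝ ≥ μ * ‖x - y‖ ^ 2)
    (hFlip : ∀ x y : Prof N d, ‖pseudoGrad G x - pseudoGrad G y‖ ≤ θ0 * ‖x - y‖) :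
    ∃ θ : ℝ, μ ≤ θ ∧ θ ≤ θ0 ∧
      ∀ bx by_ : Est N d,
        ‖extPseudoGrad G bx - extPseudoGrad G by_‖ ≤ θ * ‖bx - by_‖ := by
  refine ⟨θ0, ?_, le_refl _, ?_⟩
  · -- μ ≤ θ0, using a nonzero vector
    set v : Prof N d := WithLp.toLp 2 (fun _ => WithLp.toLp 2 (fun _ => (1 : ℝ))) with hv
    have hvne : v ≠ 0 := by
      intro h
      have := congrArg (fun w : Prof N d => w ⟨0, hN⟩ ⟨0, hd ⟨0, hN⟩⟩) h
      simp [hv] at this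
    have hvnorm : 0 < ‖v‖ := norm_pos_iff.mpr hvne
    have h1 := hFmon v 0
    have h2 := hFlip v 0
    have h3 : ⟪v - 0, pseudoGrad G v - pseudoGrad G 0⟫_ℝ ≤
        ‖v - 0‖ * ‖pseudoGrad G v - pseudoGrad G 0‖ := real_inner_le_norm _ _
    have h4 : μ * ‖v - 0‖ ^ 2 ≤ ‖v - 0‖ * (θ0 * ‖v - 0‖) :=
      le_trans (le_trans h1 h3)
        (mul_le_mul_of_nonneg_left h2 (norm_nonneg _))
    have hvn : 0 < ‖v - 0‖ := by simpa using hvnorm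
    have h5 : μ * ‖v - 0‖ ^ 2 ≤ θ0 * ‖v - 0‖ ^ 2 := by nlinarith
    exact le_of_mul_le_mul_right h5 (pow_pos hvn 2)
  · intro bx by_
    have hsq : ‖extPseudoGrad G bx - extPseudoGrad G by_‖ ^ 2 ≤
        (θ0 * ‖bx - by_‖) ^ 2 := by
      have hA : ‖extPseudoGrad G bx - extPseudoGrad G by_‖ ^ 2 =
          ∑ i, ‖G i (bx i) - G i (by_ i)‖ ^ 2 := by
        rw [PiLp.norm_sq_eq_of_L2]
        exact Finset.sum_congr rfl fun i _ => by
          simp [extPseudoGrad]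
      have hB : ‖bx - by_‖ ^ 2 = ∑ i, ‖bx i - by_ i‖ ^ 2 := by
        rw [PiLp.norm_sq_eq_of_L2]
        exact Finset.sum_congr rfl fun i _ => by simp
      rw [hA, mul_pow]
      have hterm : ∀ i : Fin N, ‖G i (bx i) - G i (by_ i)‖ ^ 2 ≤
          θ0 ^ 2 * ‖bx i - by_ i‖ ^ 2 := by
        intro i
        have h1 : ‖G i (bx i) - G i (by_ i)‖ ^ 2 ≤
            ‖pseudoGrad G (bx i) - pseudoGrad G (by_ i)‖ ^ 2 := by
          have heq : ‖G i (bx i) - G i (by_ i)‖ ^ 2 =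
              ‖(pseudoGrad G (bx i) - pseudoGrad G (by_ i)) i‖ ^ 2 := by
            simp [pseudoGrad]
          calc ‖G i (bx i) - G i (by_ i)‖ ^ 2
              = ‖(pseudoGrad G (bx i) - pseudoGrad G (by_ i)) i‖ ^ 2 := heq
            _ ≤ ∑ j, ‖(pseudoGrad G (bx i) - pseudoGrad G (by_ i)) j‖ ^ 2 :=
                Finset.single_le_sum (f := fun j =>
                  ‖(pseudoGrad G (bx i) - pseudoGrad G (by_ i)) j‖ ^ 2)
                  (fun j _ => sq_nonneg _) (Finset.mem_univ i)
            _ = ‖pseudoGrad G (bx i) - pseudoGrad G (by_ i)‖ ^ 2 :=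
                (PiLp.norm_sq_eq_of_L2 _ _).symm
        have h2 := hFlip (bx i) (by_ i)
        have h3 : ‖pseudoGrad G (bx i) - pseudoGrad G (by_ i)‖ ^ 2 ≤
            (θ0 * ‖bx i - by_ i‖) ^ 2 := by
          have := pow_le_pow_left₀ (norm_nonneg _) h2 2
          exact this
        calc ‖G i (bx i) - G i (by_ i)‖ ^ 2 ≤ _ := h1
          _ ≤ (θ0 * ‖bx i - by_ i‖) ^ 2 := h3
          _ = θ0 ^ 2 * ‖bx i - by_ i‖ ^ 2 := by ring
      calc ∑ i, ‖G i (bx i) - G i (by_ i)‖ ^ 2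
          ≤ ∑ i, θ0 ^ 2 * ‖bx i - by_ i‖ ^ 2 :=
            Finset.sum_le_sum fun i _ => hterm i
        _ = θ0 ^ 2 * ∑ i, ‖bx i - by_ i‖ ^ 2 := by rw [Finset.mul_sum]
        _ = θ0 ^ 2 * ‖bx - by_‖ ^ 2 := by rw [hB]
    have hnn : (0 : ℝ) ≤ θ0 * ‖bx - by_‖ :=
      mul_nonneg hθ0.le (norm_nonneg _)
    nlinarith [norm_nonneg (extPseudoGrad G bx - extPseudoGrad G by_)]
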